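/- Let 𝔫 be the 5-dimensional real Lie algebra with orthonormal basis {E₁,…,E₅} and non-zero brackets [E₁,E₂] = m·E₅ and [E₃,E₄] = m·E₅ with m > 0. Then the diagonal endomorphism D defined by D(E₁) = (3/2)m²·E₁, D(E₂) = (3/2)m²·E₂, D(E₃) = (3/2)m²·E₃, D(E₄) = (3/2)m²·E₄, D(E₅) = 3m²·E₅ is a derivation of 𝔫, and Ric = −2m²·Id + D. -/
import Mathlib


open scoped BigOperators

namespace Nilsoliton1

noncomputable section

abbrev V : Type := Fin 5 → ℝ

/-- The orthonormal basis vectors E₁,…,E₅ (indexed 0,…,4). -/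
def E (i : Fin 5) : V := Pi.single i 1

/-- The inner product making `E` an orthonormal basis. -/
def ip (x y : V) : ℝ := ∑ i, x i * y i

/-- `D` is a derivation of the bracket `br`. -/
def IsDerivation (br : V → V → V) (D : V →ₗ[ℝ] V) : Prop :=
  ∀ X Y : V, D (br X Y) = br (D X) Y + br X (D Y)

/-- `Ric` is the Ricci operator of the nilpotent Lie group with left-invariant
metric determined by the bracket `br` and the orthonormal basis `E`. -/
def IsRicci (br : V → V → V) (Ric : V →ₗ[ℝ] V) : Prop :=
  ∀ X Y : V, ip (Ric X) Y =
      -(1/2) * (∑ i : Fin 5, ip (br X (E i)) (br Y (E i)))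
      + (1/4) * (∑ i : Fin 5, ∑ j : Fin 5, ip (br (E i) (E j)) X * ip (br (E i) (E j)) Y)

/-- The bracket: [E₁,E₂] = m·E₅, [E₃,E₄] = m·E₅. -/
def br (m : ℝ) (X Y : V) : V :=
  (m * (X 0 * Y 1 - X 1 * Y 0) + m * (X 2 * Y 3 - X 3 * Y 2)) • E 4

theorem stmt1 (m : ℝ) (hm : 0 < m)
    (Ric : V →ₗ[ℝ] V) (hRic : IsRicci (br m) Ric)
    (D : V →ₗ[ℝ] V)
    (hD0 : D (E 0) = ((3/2) * m ^ 2) • E 0)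
    (hD1 : D (E 1) = ((3/2) * m ^ 2) • E 1)
    (hD2 : D (E 2) = ((3/2) * m ^ 2) • E 2)
    (hD3 : D (E 3) = ((3/2) * m ^ 2) • E 3)
    (hD4 : D (E 4) = (3 * m ^ 2) • E 4) :
    IsDerivation (br m) D ∧
    Ric = (-2 * m ^ 2) • (LinearMap.id : V →ₗ[ℝ] V) + D := by
  have hbasis : ∀ x : V, x = x 0 • E 0 + x 1 • E 1 + x 2 • E 2 + x 3 • E 3 + x 4 • E 4 := by
    intro x; funext i; fin_cases i <;> simp [E, Pi.single_apply]
  have hDX : ∀ x : V, D x = ((3/2) * m ^ 2) • x + ((3/2) * m ^ 2 * x 4) • E 4 := by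
    intro x
    conv_lhs => rw [hbasis x]
    simp only [map_add, map_smul, hD0, hD1, hD2, hD3, hD4]
    funext i
    fin_cases i <;> simp [E, Pi.single_apply] <;> ring
  constructor
  · intro X Y
    have hX := hDX X
    have hY := hDX Y
    rw [br, map_smul, hD4, hX, hY]
    funext i
    fin_cases i <;> simp [br, E, Pi.single_apply] <;> ring
  · apply LinearMap.ext
    intro X
    have key : ∀ Y : V, ip (Ric X) Y = ip (((-2 * m ^ 2) • (LinearMap.id : V →ₗ[ℝ] V) + D) X) Y := by
      intro Y
      rw [hRic X Y]
      simp only [LinearMap.add_apply, LinearMap.smul_apply, LinearMap.id_apply, hDX X]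
      simp [ip, br, E, Pi.single_apply, Fin.sum_univ_five]
      ring
    funext j
    have h := key (E j)
    simp only [ip, E, Fin.sum_univ_five] at h
    fin_cases j <;> simpa [Pi.single_apply] using h

end

end Nilsoliton1
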